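/- Let a₀, a₁, a₂, a₃ be real numbers satisfying |a₁ + a₃| < 1 + a₀ + a₂, |a₁ − a₃| < 2(1 − a₀), a₂ − 3a₀ < 3, and a₀ + a₂ + a₀² + a₁² + a₀²a₂ + a₀a₃² < 1 + 2a₀a₂ + a₁a₃ + a₀a₁a₃ + a₀³. Then |a₃| < 6, |a₂| < 6, |a₁| < 6, and |a₀| < 1. -/
import Mathlib


theorem routh_hurwitz_quartic_coeff_bound (a₀ a₁ a₂ a₃ : ℝ)
    (h1 : |a₁ + a₃| < 1 + a₀ + a₂) (h2 : |a₁ - a₃| < 2 * (1 - a₀))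
    (h3 : a₂ - 3 * a₀ < 3)
    (h4 : a₀ + a₂ + a₀ ^ 2 + a₁ ^ 2 + a₀ ^ 2 * a₂ + a₀ * a₃ ^ 2 <
          1 + 2 * a₀ * a₂ + a₁ * a₃ + a₀ * a₁ * a₃ + a₀ ^ 3) :
    |a₃| < 6 ∧ |a₂| < 6 ∧ |a₁| < 6 ∧ |a₀| < 1 := by
  obtain ⟨h1a, h1b⟩ := abs_lt.mp h1
  obtain ⟨h2a, h2b⟩ := abs_lt.mp h2
  have ha0lt : a₀ < 1 := by
    have := abs_nonneg (a₁ - a₃); linarith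
  have ha0gt : -1 < a₀ := by
    nlinarith [sq_nonneg (a₁ - a₃), sq_nonneg (a₁ + a₃), sq_nonneg (1 - a₀),
      mul_pos (sub_pos.mpr h2b) (sub_pos.mpr h2a),
      mul_pos (sub_pos.mpr h1b) (sub_pos.mpr h1a),
      mul_pos (mul_pos (sub_pos.mpr h2b) (sub_pos.mpr h2a)) (sub_pos.mpr ha0lt),
      mul_nonneg (mul_nonneg (sub_pos.mpr h1b).le (sub_pos.mpr h1a).le) (sub_pos.mpr ha0lt).le]
  refine ⟨abs_lt.mpr ⟨by linarith, by linarith⟩, abs_lt.mpr ⟨by linarith, by linarith⟩,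
    abs_lt.mpr ⟨by linarith, by linarith⟩, abs_lt.mpr ⟨ha0gt, ha0lt⟩⟩
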